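/- arXiv:2007.09345 — 5 statements merged into one kernel-verified Lean document; each statement's English description precedes it below -/
import Mathlib

section
/- For a symmetric dissimilarity map D on {a,b,c,d} with zero diagonal, the Q-criterion Q(x,y) = 2·D(x,y) − Σ_z D(x,z) − Σ_z D(y,z) always attains its minimum over unordered pairs of distinct elements in at least two distinct pairs. -/
theorem stmt1 (D : Fin 4 → Fin 4 → ℝ)
    (hsym : ∀ x y, D x y = D y x) (hdiag : ∀ x, D x x = 0)
    (Q : Fin 4 → Fin 4 → ℝ)
    (hQ : ∀ x y, Q x y = 2 * D x y - (∑ z, D x z) - (∑ z, D y z)) :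
    ∃ i j k l : Fin 4, i ≠ j ∧ k ≠ l ∧ ({i, j} : Finset (Fin 4)) ≠ {k, l} ∧
      (∀ p q : Fin 4, p ≠ q → Q i j ≤ Q p q) ∧
      (∀ p q : Fin 4, p ≠ q → Q k l ≤ Q p q) := by
  have hsymQ : ∀ p q : Fin 4, Q p q = Q q p := by
    intro p q; rw [hQ, hQ, hsym]; ring
  have h1 : Q 2 3 = Q 0 1 := by
    simp only [hQ, Fin.sum_univ_four]
    linarith [hsym 0 1, hsym 0 2, hsym 0 3, hsym 1 2, hsym 1 3, hsym 2 3,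
      hdiag 0, hdiag 1, hdiag 2, hdiag 3]
  have h2 : Q 1 3 = Q 0 2 := by
    simp only [hQ, Fin.sum_univ_four]
    linarith [hsym 0 1, hsym 0 2, hsym 0 3, hsym 1 2, hsym 1 3, hsym 2 3,
      hdiag 0, hdiag 1, hdiag 2, hdiag 3]
  have h3 : Q 1 2 = Q 0 3 := by
    simp only [hQ, Fin.sum_univ_four]
    linarith [hsym 0 1, hsym 0 2, hsym 0 3, hsym 1 2, hsym 1 3, hsym 2 3,
      hdiag 0, hdiag 1, hdiag 2, hdiag 3]
  have key : ∀ p q : Fin 4, p ≠ q → Q p q = Q 0 1 ∨ Q p q = Q 0 2 ∨ Q p q = Q 0 3 := by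
    clear hQ hsym hdiag
    intro p q h
    fin_cases p <;> fin_cases q <;> simp_all <;> exact Or.inl (hsymQ 1 0)
  rcases le_total (Q 0 1) (Q 0 2) with hab | hab
  · rcases le_total (Q 0 1) (Q 0 3) with hac | hac
    · refine ⟨0, 1, 2, 3, by decide, by decide, by decide, ?_, ?_⟩ <;>
        (intro p q hpq; rcases key p q hpq with h | h | h <;> linarith)
    · refine ⟨0, 3, 1, 2, by decide, by decide, by decide, ?_, ?_⟩ <;>
        (intro p q hpq; rcases key p q hpq with h | h | h <;> linarith)
  · rcases le_total (Q 0 2) (Q 0 3) with hbc | hbc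
    · refine ⟨0, 2, 1, 3, by decide, by decide, by decide, ?_, ?_⟩ <;>
        (intro p q hpq; rcases key p q hpq with h | h | h <;> linarith)
    · refine ⟨0, 3, 1, 2, by decide, by decide, by decide, ?_, ?_⟩ <;>
        (intro p q hpq; rcases key p q hpq with h | h | h <;> linarith)
end

section
/- Define the Motzkin triangle by M(0,0) = 1, M(k,j) = 0 for j < 0 or j > k, and M(k+1,j) = M(k,j−1) + M(k,j) + M(k,j+1). Then for all k ≥ 0 and 0 ≤ j ≤ k, M(k,j) = Σ_{i=0}^{k} C(k,i) · [C(k−i, (k+j−i)/2) − C(k−i, (k+j−i+2)/2)], where a term is 0 when the indicated division is not exact. -/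
/-- Auxiliary: the "ballot-type" difference of central binomials. -/
def Taux (n m : ℕ) : ℤ :=
  if m % 2 = 0 then (n.choose (m / 2) : ℤ) - (n.choose (m / 2 + 1) : ℤ) else 0

def Saux (k j : ℕ) : ℤ :=
  ∑ i ∈ Finset.range (k + 1), (k.choose i : ℤ) * Taux (k - i) (k + j - i)

lemma Taux_step (n m : ℕ) : Taux (n + 1) (m + 2) = Taux n m + Taux n (m + 2) := by
  unfold Taux
  have h2 : (m + 2) % 2 = m % 2 := by omega
  have hd : (m + 2) / 2 = m / 2 + 1 := by omega
  rw [h2, hd]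
  by_cases h : m % 2 = 0
  · simp only [h, if_true]
    rw [Nat.choose_succ_succ (n := n) (k := m / 2),
        Nat.choose_succ_succ (n := n) (k := m / 2 + 1)]
    push_cast; ring
  · simp [h]

lemma Taux_diag (n : ℕ) : Taux (n + 1) (n + 1) = Taux n (n + 1) := by
  unfold Taux
  by_cases h : (n + 1) % 2 = 0
  · simp only [h, if_true]
    obtain ⟨t, rfl⟩ : ∃ t, n = 2 * t + 1 := ⟨n / 2, by omega⟩
    have hd : (2 * t + 1 + 1) / 2 = t + 1 := by omega
    rw [hd]
    rw [Nat.choose_succ_succ (n := 2 * t + 1) (k := t),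
        Nat.choose_succ_succ (n := 2 * t + 1) (k := t + 1)]
    have hsym : (2 * t + 1).choose t = (2 * t + 1).choose (t + 1) := by
      rw [← Nat.choose_symm (by omega : t ≤ 2 * t + 1)]
      congr 1; omega
    push_cast [hsym]; ring
  · simp [h]

lemma Taux_zero (n m : ℕ) (h : 2 * n < m) : Taux n m = 0 := by
  unfold Taux
  by_cases hp : m % 2 = 0
  · simp only [hp, if_true]
    rw [Nat.choose_eq_zero_of_lt (by omega), Nat.choose_eq_zero_of_lt (by omega)]
    simp
  · simp [hp]

lemma Saux_zero (k j : ℕ) (h : k < j) : Saux k j = 0 := by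
  unfold Saux
  refine Finset.sum_eq_zero fun i hi => ?_
  rw [Finset.mem_range] at hi
  rw [Taux_zero (k - i) (k + j - i) (by omega), mul_zero]

/-- Pascal splitting of a binomial-weighted sum. -/
lemma sum_pascal (k : ℕ) (f : ℕ → ℤ) :
    ∑ i ∈ Finset.range (k + 2), ((k + 1).choose i : ℤ) * f i
      = ∑ i ∈ Finset.range (k + 1), (k.choose i : ℤ) * f i
        + ∑ i ∈ Finset.range (k + 1), (k.choose i : ℤ) * f (i + 1) := by
  rw [Finset.sum_range_succ' (fun i => ((k + 1).choose i : ℤ) * f i) (k + 1)]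
  have hterm : ∀ i, ((k + 1).choose (i + 1) : ℤ) * f (i + 1)
      = (k.choose i : ℤ) * f (i + 1) + (k.choose (i + 1) : ℤ) * f (i + 1) := by
    intro i; rw [Nat.choose_succ_succ]; push_cast; ring
  rw [Finset.sum_congr rfl fun i _ => hterm i, Finset.sum_add_distrib]
  have hB : (∑ i ∈ Finset.range (k + 1), (k.choose (i + 1) : ℤ) * f (i + 1))
      + (k.choose 0 : ℤ) * f 0
      = ∑ i ∈ Finset.range (k + 2), (k.choose i : ℤ) * f i :=
    (Finset.sum_range_succ' (fun i => (k.choose i : ℤ) * f i) (k + 1)).symm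
  have htop : ∑ i ∈ Finset.range (k + 2), (k.choose i : ℤ) * f i
      = ∑ i ∈ Finset.range (k + 1), (k.choose i : ℤ) * f i := by
    rw [Finset.sum_range_succ, Nat.choose_eq_zero_of_lt (by omega)]
    simp
  have h0 : ((k + 1).choose 0 : ℤ) * f 0 = (k.choose 0 : ℤ) * f 0 := by simp
  rw [h0]
  linarith [hB, htop]

lemma Saux_rec0 (k : ℕ) : Saux (k + 1) 0 = Saux k 0 + Saux k 1 := by
  unfold Saux
  rw [sum_pascal k (fun i => Taux (k + 1 - i) (k + 1 + 0 - i))]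
  have hA : ∑ i ∈ Finset.range (k + 1), (k.choose i : ℤ) * Taux (k + 1 - i) (k + 1 + 0 - i)
      = ∑ i ∈ Finset.range (k + 1), (k.choose i : ℤ) * Taux (k - i) (k + 1 - i) := by
    refine Finset.sum_congr rfl fun i hi => ?_
    rw [Finset.mem_range] at hi
    have h1 : k + 1 - i = (k - i) + 1 := by omega
    have h2 : k + 1 + 0 - i = (k - i) + 1 := by omega
    simp only [h1, h2]
    rw [Taux_diag]
  have hB : ∑ i ∈ Finset.range (k + 1),
        (k.choose i : ℤ) * Taux (k + 1 - (i + 1)) (k + 1 + 0 - (i + 1))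
      = ∑ i ∈ Finset.range (k + 1), (k.choose i : ℤ) * Taux (k - i) (k + 0 - i) := by
    refine Finset.sum_congr rfl fun i hi => ?_
    rw [Finset.mem_range] at hi
    congr 2 <;> omega
  rw [hA, hB]
  ring

lemma Saux_rec (k j : ℕ) :
    Saux (k + 1) (j + 1) = Saux k j + Saux k (j + 1) + Saux k (j + 2) := by
  unfold Saux
  have := sum_pascal k (fun i => Taux (k + 1 - i) (k + 1 + (j + 1) - i))
  rw [this]
  have hmid : ∑ i ∈ Finset.range (k + 1),
      (k.choose i : ℤ) * Taux (k + 1 - (i + 1)) (k + 1 + (j + 1) - (i + 1))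
      = ∑ i ∈ Finset.range (k + 1), (k.choose i : ℤ) * Taux (k - i) (k + (j + 1) - i) := by
    refine Finset.sum_congr rfl fun i hi => ?_
    rw [Finset.mem_range] at hi
    congr 2 <;> omega
  have hfirst : ∑ i ∈ Finset.range (k + 1),
      (k.choose i : ℤ) * Taux (k + 1 - i) (k + 1 + (j + 1) - i)
      = ∑ i ∈ Finset.range (k + 1),
          ((k.choose i : ℤ) * Taux (k - i) (k + j - i)
            + (k.choose i : ℤ) * Taux (k - i) (k + (j + 2) - i)) := by
    refine Finset.sum_congr rfl fun i hi => ?_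
    rw [Finset.mem_range] at hi
    have h1 : k + 1 - i = (k - i) + 1 := by omega
    have h2 : k + 1 + (j + 1) - i = (k + j - i) + 2 := by omega
    have h3 : k + (j + 2) - i = (k + j - i) + 2 := by omega
    rw [h1, h2, h3, Taux_step]
    ring
  rw [hmid, hfirst, Finset.sum_add_distrib]
  ring

lemma M_eq_Saux (M : ℕ → ℕ → ℕ)
    (h00 : M 0 0 = 1)
    (hhigh : ∀ k j, k < j → M k j = 0)
    (hrec0 : ∀ k, M (k + 1) 0 = M k 0 + M k 1)
    (hrec : ∀ k j, M (k + 1) (j + 1) = M k j + M k (j + 1) + M k (j + 2)) :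
    ∀ k j, (M k j : ℤ) = Saux k j := by
  intro k
  induction k with
  | zero =>
    intro j
    cases j with
    | zero =>
      rw [h00]
      unfold Saux Taux
      norm_num
    | succ j =>
      rw [hhigh 0 (j + 1) (by omega), Saux_zero 0 (j + 1) (by omega)]
      norm_num
  | succ k ih =>
    intro j
    cases j with
    | zero =>
      rw [hrec0 k, Saux_rec0 k]
      push_cast [ih 0, ih 1]; ring
    | succ j =>
      rw [hrec k j, Saux_rec k j]
      push_cast [ih j, ih (j + 1), ih (j + 2)]; ring

theorem stmt6 (M : ℕ → ℕ → ℕ)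
    (h00 : M 0 0 = 1)
    (hhigh : ∀ k j, k < j → M k j = 0)
    (hrec0 : ∀ k, M (k + 1) 0 = M k 0 + M k 1)
    (hrec : ∀ k j, M (k + 1) (j + 1) = M k j + M k (j + 1) + M k (j + 2)) :
    ∀ k j, j ≤ k → (M k j : ℤ) =
      ∑ i ∈ Finset.range (k + 1),
        if (k + j - i) % 2 = 0 then
          (Nat.choose k i : ℤ) *
            ((Nat.choose (k - i) ((k + j - i) / 2) : ℤ) -
              (Nat.choose (k - i) ((k + j - i + 2) / 2) : ℤ))
        else 0 := by
  intro k j _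
  rw [M_eq_Saux M h00 hhigh hrec0 hrec k j]
  unfold Saux Taux
  refine Finset.sum_congr rfl fun i hi => ?_
  rw [mul_ite, mul_zero]
  by_cases h : (k + j - i) % 2 = 0
  · simp only [h, if_true]
    have : (k + j - i + 2) / 2 = (k + j - i) / 2 + 1 := by omega
    rw [this]
  · simp [h]
end

section
/- Let M_k denote the k-th Motzkin number and C_k the k-th Catalan number. Then for all k ≥ 0, C_{k+1} = Σ_{i=0}^{k} C(k,i)·M_i. -/
private lemma castE3 (k i : ℕ) :
    ((k : ℚ) + 1 - i) * ((k + 1).choose i) = ((k : ℚ) + 1) * (k.choose i) := by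
  rcases le_or_gt i (k + 1) with h | h
  · have h' := Nat.choose_mul_succ_eq k i
    have hc := congrArg (fun n : ℕ => (n : ℚ)) h'
    push_cast [Nat.cast_sub h] at hc
    linarith
  · rw [Nat.choose_eq_zero_of_lt h, Nat.choose_eq_zero_of_lt (by omega)]
    simp

private lemma castE4 (k i : ℕ) :
    ((i : ℚ) + 1) * (k.choose (i + 1)) = ((k : ℚ) - i) * (k.choose i) := by
  rcases le_or_gt i k with h | h
  · have h' := Nat.choose_succ_right_eq k i
    have hc := congrArg (fun n : ℕ => (n : ℚ)) h'
    push_cast [Nat.cast_sub h] at hc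
    linarith
  · rw [Nat.choose_eq_zero_of_lt h, Nat.choose_eq_zero_of_lt (by omega)]
    simp

theorem stmt8 (M : ℕ → ℕ)
    (h0 : M 0 = 1) (h1 : M 1 = 1)
    (hrec : ∀ i, 2 ≤ i → (i + 2) * M i = (2 * i + 1) * M (i - 1) + 3 * (i - 1) * M (i - 2)) :
    ∀ k, catalan (k + 1) = ∑ i ∈ Finset.range (k + 1), Nat.choose k i * M i := by
  have hrec' : ∀ i : ℕ,
      ((i : ℚ) + 4) * (M (i + 2)) = (2 * (i : ℚ) + 5) * (M (i + 1)) + 3 * ((i : ℚ) + 1) * (M i) := by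
    intro i
    have h := hrec (i + 2) (by omega)
    have h' : (i + 2 + 2) * M (i + 2) = (2 * (i + 2) + 1) * M (i + 1) + 3 * (i + 1) * M i := by
      have e1 : i + 2 - 1 = i + 1 := by omega
      have e2 : i + 2 - 2 = i := by omega
      rw [e1, e2] at h
      exact h
    have hc := congrArg (fun n : ℕ => (n : ℚ)) h'
    push_cast at hc
    linarith
  -- key telescoping identity
  have key : ∀ k : ℕ,
      ((k : ℚ) + 3) * ∑ i ∈ Finset.range (k + 2), ((k + 1).choose i : ℚ) * M i
        = (4 * (k : ℚ) + 6) * ∑ i ∈ Finset.range (k + 1), (k.choose i : ℚ) * M i := by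
    intro k
    set g : ℕ → ℚ := fun i =>
      -(((i : ℚ) + 2)) * ((k + 1).choose i) * M i + (3 * (i : ℚ) + 5) * (k.choose i) * M i
        - ((i : ℚ) + 3) * (k.choose i) * M (i + 1) with hg
    have step : ∀ i : ℕ,
        ((k : ℚ) + 3) * ((k + 1).choose i) * M i - (4 * (k : ℚ) + 6) * (k.choose i) * M i
          = g (i + 1) - g i := by
      intro i
      have e1 := hrec' i
      have e2 : (((k + 1).choose (i + 1) : ℕ) : ℚ) = (k.choose (i + 1)) + (k.choose i) := by
        rw [Nat.choose_succ_succ]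
        push_cast
        ring
      have e3 := castE3 k i
      have e4 := castE4 k i
      simp only [hg]
      push_cast
      linear_combination ((k.choose (i + 1) : ℚ)) * e1
        + (((i : ℚ) + 3) * (M (i + 1))) * e2 + ((M i : ℚ)) * e3 + 3 * ((M i : ℚ)) * e4
    have tsum : ∑ i ∈ Finset.range (k + 2), (g (i + 1) - g i) = g (k + 2) - g 0 :=
      Finset.sum_range_sub g (k + 2)
    have hg0 : g 0 = 0 := by
      simp only [hg]
      rw [h0, h1]
      norm_num
    have hgk : g (k + 2) = 0 := by
      simp only [hg]
      rw [Nat.choose_eq_zero_of_lt (show k + 1 < k + 2 by omega),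
        Nat.choose_eq_zero_of_lt (show k < k + 2 by omega)]
      push_cast
      ring
    have hsum0 :
        ∑ i ∈ Finset.range (k + 2),
          (((k : ℚ) + 3) * ((k + 1).choose i) * M i - (4 * (k : ℚ) + 6) * (k.choose i) * M i)
          = 0 := by
      rw [Finset.sum_congr rfl fun i _ => step i, tsum, hg0, hgk]
      ring
    have hext : ∑ i ∈ Finset.range (k + 2), ((k.choose i : ℚ)) * M i
        = ∑ i ∈ Finset.range (k + 1), ((k.choose i : ℚ)) * M i := by
      rw [Finset.sum_range_succ, Nat.choose_eq_zero_of_lt (show k < k + 1 by omega)]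
      push_cast
      ring
    have hd := hsum0
    rw [Finset.sum_sub_distrib] at hd
    rw [← hext, Finset.mul_sum, Finset.mul_sum]
    have hA : ∑ i ∈ Finset.range (k + 2), ((k : ℚ) + 3) * (((k + 1).choose i : ℚ) * M i)
        = ∑ i ∈ Finset.range (k + 2), ((k : ℚ) + 3) * ((k + 1).choose i : ℚ) * M i :=
      Finset.sum_congr rfl fun i _ => by ring
    have hB : ∑ i ∈ Finset.range (k + 2), (4 * (k : ℚ) + 6) * ((k.choose i : ℚ) * M i)
        = ∑ i ∈ Finset.range (k + 2), (4 * (k : ℚ) + 6) * (k.choose i : ℚ) * M i :=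
      Finset.sum_congr rfl fun i _ => by ring
    rw [hA, hB]
    linarith
  -- Catalan recurrence in ℚ
  have hcat : ∀ k : ℕ, ((k : ℚ) + 3) * catalan (k + 2) = (4 * (k : ℚ) + 6) * catalan (k + 1) := by
    intro k
    have hb := Nat.succ_mul_centralBinom_succ (k + 1)
    have h2 := succ_mul_catalan_eq_centralBinom (k + 2)
    have h3 := succ_mul_catalan_eq_centralBinom (k + 1)
    have hbq : ((k : ℚ) + 2) * ((k + 2).centralBinom : ℚ)
        = (4 * (k : ℚ) + 6) * ((k + 1).centralBinom : ℚ) := by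
      have := congrArg (fun n : ℕ => (n : ℚ)) hb
      push_cast at this
      linarith
    have h2q : ((k : ℚ) + 3) * (catalan (k + 2) : ℚ) = ((k + 2).centralBinom : ℚ) := by
      have := congrArg (fun n : ℕ => (n : ℚ)) h2
      push_cast at this
      linarith
    have h3q : ((k : ℚ) + 2) * (catalan (k + 1) : ℚ) = ((k + 1).centralBinom : ℚ) := by
      have := congrArg (fun n : ℕ => (n : ℚ)) h3
      push_cast at this
      linarith
    have hne : ((k : ℚ) + 2) ≠ 0 := by positivity
    apply mul_left_cancel₀ hne
    linear_combination ((k : ℚ) + 2) * h2q + hbq + (-(4 * (k : ℚ) + 6)) * h3q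
  -- main induction
  have main : ∀ k : ℕ,
      ((catalan (k + 1) : ℚ)) = ∑ i ∈ Finset.range (k + 1), (k.choose i : ℚ) * M i := by
    intro k
    induction k with
    | zero => simp [h0, catalan_one]
    | succ k ih =>
      have hk := key k
      rw [← ih] at hk
      have hc := hcat k
      have hne : ((k : ℚ) + 3) ≠ 0 := by positivity
      have heq : ((k : ℚ) + 3) * (catalan (k + 2) : ℚ)
          = ((k : ℚ) + 3) * ∑ i ∈ Finset.range (k + 2), ((k + 1).choose i : ℚ) * M i := by
        rw [hc, ← hk]
      exact mul_left_cancel₀ hne heq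
  intro k
  have h' : ((catalan (k + 1) : ℚ))
      = ((∑ i ∈ Finset.range (k + 1), k.choose i * M i : ℕ) : ℚ) := by
    push_cast
    exact main k
  exact_mod_cast h'
end

section
/- Define the weighted Motzkin triangle for fixed n ≥ 4 by W(0,0) = C(n,2), W(k,j) = 0 for j < 0 or j > k, and W(k+1,j) = a(k,j−1)·W(k,j−1) + c(k,j)·W(k,j) + b(k,j+1)·W(k,j+1), where a(s,j) = C(n−s−j−2, 2), b(s,j) = C(j+1, 2), c(s,j) = (n−s−j−2)·(j+1). Then W(n−4,0) + W(n−4,1) + W(n−4,2) = C(n,2)·C(n−1,2)·…·C(4,2). -/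
theorem stmt10 (n : ℕ) (hn : 4 ≤ n)
    (a b c : ℕ → ℕ → ℕ)
    (ha : ∀ s j, a s j = Nat.choose (n - s - j - 2) 2)
    (hb : ∀ s j, b s j = Nat.choose (j + 1) 2)
    (hc : ∀ s j, c s j = (n - s - j - 2) * (j + 1))
    (W : ℕ → ℕ → ℕ)
    (hW0 : W 0 0 = Nat.choose n 2)
    (hWhigh : ∀ k j, k < j → W k j = 0)
    (hrec0 : ∀ k, W (k + 1) 0 = c k 0 * W k 0 + b k 1 * W k 1)
    (hrec : ∀ k j, W (k + 1) (j + 1) =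
      a k j * W k j + c k (j + 1) * W k (j + 1) + b k (j + 2) * W k (j + 2)) :
    W (n - 4) 0 + W (n - 4) 1 + W (n - 4) 2 = ∏ m ∈ Finset.Icc 4 n, Nat.choose m 2 := by
  -- basic binomial identity C(x,2)+x*y+C(y,2) = C(x+y,2)
  have hcs : ∀ m : ℕ, Nat.choose (m+1) 2 = Nat.choose m 2 + m := by
    intro m; simp [Nat.choose_succ_succ]; omega
  have hchoose : ∀ x y : ℕ,
      Nat.choose x 2 + x * y + Nat.choose y 2 = Nat.choose (x + y) 2 := by
    intro x y
    induction x with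
    | zero => simp
    | succ x ih =>
      have h1 := hcs x
      have h2 : Nat.choose (x+1+y) 2 = Nat.choose (x+y) 2 + (x+y) := by
        have hxy : x + 1 + y = (x + y) + 1 := by ring
        rw [hxy]; exact hcs (x+y)
      have h3 : (x+1) * y = x * y + y := by ring
      omega
  -- vanishing lemma
  have hvan : ∀ k j, n - 2 < k + j → W k j = 0 := by
    intro k
    induction k with
    | zero => intro j hj; exact hWhigh 0 j (by omega)
    | succ k ih =>
      intro j hj
      cases j with
      | zero =>
        rw [hrec0, hc, ih 1 (by omega)]
        have h0 : n - k - 0 - 2 = 0 := by omega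
        rw [h0]; ring
      | succ j =>
        rw [hrec, ha, hc, ih (j+2) (by omega)]
        have h2 : n - k - (j+1) - 2 = 0 := by omega
        rw [h2, Nat.choose_eq_zero_of_lt (by omega : n - k - j - 2 < 2)]
        ring
  -- row sum recursion
  have hstep : ∀ k, k ≤ n → (∑ j ∈ Finset.range (n+2), W (k+1) j)
      = Nat.choose (n - k - 1) 2 * ∑ j ∈ Finset.range (n+2), W k j := by
    intro k hk
    have hWn1 : W k (n+1) = 0 := hWhigh k (n+1) (by omega)
    have hWn2 : W k (n+2) = 0 := hWhigh k (n+2) (by omega)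
    have hb0 : b k 0 = 0 := by rw [hb]; decide
    have key : (∑ j ∈ Finset.range (n+2), W (k+1) j)
        = ∑ j ∈ Finset.range (n+2), (a k j + c k j + b k j) * W k j := by
      have eL : (∑ j ∈ Finset.range (n+2), W (k+1) j)
          = (∑ j ∈ Finset.range (n+1), a k j * W k j)
            + (∑ j ∈ Finset.range (n+1), c k (j+1) * W k (j+1))
            + (∑ j ∈ Finset.range (n+1), b k (j+2) * W k (j+2))
            + (c k 0 * W k 0 + b k 1 * W k 1) := by
        rw [show n + 2 = n + 1 + 1 from rfl,
          Finset.sum_range_succ' (fun j => W (k+1) j) (n+1), hrec0]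
        simp only [hrec]
        rw [Finset.sum_add_distrib, Finset.sum_add_distrib]
      have eA : (∑ j ∈ Finset.range (n+2), a k j * W k j)
          = ∑ j ∈ Finset.range (n+1), a k j * W k j := by
        rw [show n + 2 = n + 1 + 1 from rfl, Finset.sum_range_succ, hWn1]
        ring
      have eC : (∑ j ∈ Finset.range (n+2), c k j * W k j)
          = (∑ j ∈ Finset.range (n+1), c k (j+1) * W k (j+1)) + c k 0 * W k 0 :=
        Finset.sum_range_succ' (fun j => c k j * W k j) (n+1)
      have eB : (∑ j ∈ Finset.range (n+2), b k j * W k j)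
          = (∑ j ∈ Finset.range (n+1), b k (j+2) * W k (j+2)) + b k 1 * W k 1 := by
        rw [show n + 2 = n + 1 + 1 from rfl,
          Finset.sum_range_succ' (fun j => b k j * W k j) (n+1), hb0,
          Finset.sum_range_succ' (fun j => b k (j+1) * W k (j+1)) n]
        have eB2 : (∑ j ∈ Finset.range (n+1), b k (j+2) * W k (j+2))
            = ∑ j ∈ Finset.range n, b k (j+2) * W k (j+2) := by
          rw [Finset.sum_range_succ, hWn2]; ring
        rw [eB2]; ring
      rw [eL]
      simp only [add_mul, Finset.sum_add_distrib, eA, eC, eB]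
      ring
    rw [key, Finset.mul_sum]
    apply Finset.sum_congr rfl
    intro j _
    by_cases hz : W k j = 0
    · rw [hz]; ring
    · have hjk : k + j ≤ n - 2 := by
        by_contra hcon
        exact hz (hvan k j (by omega))
      congr 1
      rw [ha, hb, hc]
      have hxy : n - k - j - 2 + (j + 1) = n - k - 1 := by omega
      rw [← hxy]
      exact hchoose (n - k - j - 2) (j + 1)
  -- invariant
  have hinv : ∀ k, k ≤ n - 4 →
      (∑ j ∈ Finset.range (n+2), W k j) = ∏ m ∈ Finset.Icc (n - k) n, Nat.choose m 2 := by
    intro k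
    induction k with
    | zero =>
      intro _
      have hS0 : (∑ j ∈ Finset.range (n+2), W 0 j) = W 0 0 := by
        apply Finset.sum_eq_single_of_mem 0 (by simp)
        intro j _ hj
        exact hWhigh 0 j (by omega)
      simp only [Nat.sub_zero, Finset.Icc_self, Finset.prod_singleton]
      rw [hS0, hW0]
    | succ k ih =>
      intro hk
      have hk' : k ≤ n - 4 := by omega
      rw [hstep k (by omega), ih hk']
      have hIcc : ∀ m : ℕ, Finset.Icc m n = Finset.Ico m (n+1) := by
        intro m; rw [Finset.Ico_add_one_right_eq_Icc]
      rw [hIcc, hIcc]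
      rw [Finset.prod_eq_prod_Ico_succ_bot (by omega : n - (k+1) < n + 1)]
      have h1 : n - (k+1) + 1 = n - k := by omega
      have h2 : n - (k+1) = n - k - 1 := by omega
      rw [h1, h2]
  -- finish
  have hfin : (∑ j ∈ Finset.range (n+2), W (n-4) j)
      = ∏ m ∈ Finset.Icc 4 n, Nat.choose m 2 := by
    rw [hinv (n-4) le_rfl]
    have h4 : n - (n - 4) = 4 := by omega
    rw [h4]
  rw [← hfin]
  have hsub : Finset.range 3 ⊆ Finset.range (n+2) := by
    apply Finset.range_subset_range.mpr; omega
  rw [← Finset.sum_subset hsub (fun x _ hx => by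
    apply hvan
    simp only [Finset.mem_range, not_lt] at hx
    omega)]
  simp [Finset.sum_range_succ]
end

section
/- Let D be an additive dissimilarity map on four leaves {a,b,c,d} realized by an unrooted binary tree with cherries {a,b} and {c,d} and nonnegative edge weights, with internal edge weight w > 0. Then Q(a,b) = Q(c,d) < Q(x,y) for every other pair {x,y}, where Q(x,y) = 2·D(x,y) − Σ_z D(x,z) − Σ_z D(y,z). -/
theorem stmt18 (pa pb pc pd w : ℝ)
    (hpa : 0 ≤ pa) (hpb : 0 ≤ pb) (hpc : 0 ≤ pc) (hpd : 0 ≤ pd) (hw : 0 < w)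
    (D : Fin 4 → Fin 4 → ℝ)
    (hsym : ∀ x y, D x y = D y x) (hdiag : ∀ x, D x x = 0)
    (hab : D 0 1 = pa + pb) (hcd : D 2 3 = pc + pd)
    (hac : D 0 2 = pa + w + pc) (had : D 0 3 = pa + w + pd)
    (hbc : D 1 2 = pb + w + pc) (hbd : D 1 3 = pb + w + pd)
    (Q : Fin 4 → Fin 4 → ℝ)
    (hQ : ∀ x y, Q x y = 2 * D x y - (∑ z, D x z) - (∑ z, D y z)) :
    Q 0 1 = Q 2 3 ∧
    ∀ x y : Fin 4, x ≠ y →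
      ({x, y} : Finset (Fin 4)) ≠ {0, 1} → ({x, y} : Finset (Fin 4)) ≠ {2, 3} →
      Q 0 1 < Q x y := by
  have hba := hsym 1 0
  have hca := hsym 2 0
  have hda := hsym 3 0
  have hcb := hsym 2 1
  have hdb := hsym 3 1
  have hdc := hsym 3 2
  constructor
  · simp only [hQ, Fin.sum_univ_four, hdiag, hab, hcd, hac, had, hbc, hbd,
      hba, hca, hda, hcb, hdb, hdc]
    ring
  · intro x y hxy h1 h2
    fin_cases x <;> fin_cases y <;>
      simp_all (config := {decide := true}) only [hQ, Fin.sum_univ_four, hdiag,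
        hab, hcd, hac, had, hbc, hbd, hba, hca, hda, hcb, hdb, hdc, ne_eq, Fin.reduceFinMk] <;>
      first
      | exact absurd rfl hxy
      | (exfalso; apply h1; decide)
      | (exfalso; apply h2; decide)
      | linarith
end
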